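/- Let e ∈ A be an idempotent (e² = e). The Chern character chain ch(e) = tr(e) + Σ_{n≥1} (-1)ⁿ (2n)!/n! · tr((e - 1/2)(de de)ⁿ) is a cycle for the total boundary b + B: for all n ≥ 0, b(ch(e)_{2n+2}) + B(ch(e)_{2n}) = 0, where ch(e)_{2n} denotes the component in Ω^{2n}A. -/
import Mathlib


/-- Let `e ∈ A` be an idempotent (`e² = e`) in a unital `ℂ`-algebra.
In the universal DG algebra `ΩA` (axiomatized as before, with Hochschild operator `b`
and Connes boundary `B = (1 + k + ⋯ + kⁿ)d`), the Chern character chain with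
components `ch₀ = e` and `ch_{2n} = (-1)ⁿ (2n)!/n! · (e - ½)(de de)ⁿ` for `n ≥ 1`
is a cycle for the total boundary `b + B`:
`b(ch_{2n+2}) + B(ch_{2n}) = 0` for all `n ≥ 0`.

Here `w m = (e - ½)·(de)^m` is defined recursively by `w 0 = ι e - ½·1` and
`w (m+1) = (w m)·de`. -/
theorem chern_character_is_a_cycle
    (A : Type*) [Ring A] [Algebra ℂ A]
    (Ω : ℕ → Type*) [∀ n, AddCommGroup (Ω n)] [∀ n, Module ℂ (Ω n)]
    (ι : A →ₗ[ℂ] Ω 0) (one : Ω 0)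
    (d : ∀ n, Ω n →ₗ[ℂ] Ω (n + 1))
    (b : ∀ n, Ω (n + 1) →ₗ[ℂ] Ω n)
    (mulda : ∀ n, A → Ω n →ₗ[ℂ] Ω (n + 1))
    (ra : ∀ n, A → Ω n →ₗ[ℂ] Ω n)
    (la : ∀ n, A → Ω n →ₗ[ℂ] Ω n)
    (h_rr : ∀ n (a a' : A) (ω : Ω n), ra n a' (ra n a ω) = ra n (a * a') ω)
    (h_ll : ∀ n (a a' : A) (ω : Ω n), la n a (la n a' ω) = la n (a' * a) ω)
    (h_rl : ∀ n (a a' : A) (ω : Ω n), ra n a' (la n a ω) = la n a (ra n a' ω))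
    (h_ra0 : ∀ x a : A, ra 0 a (ι x) = ι (x * a))
    (h_la0 : ∀ a x : A, la 0 a (ι x) = ι (a * x))
    (h_one_r : ∀ a : A, ra 0 a one = ι a)
    (h_one_l : ∀ a : A, la 0 a one = ι a)
    (h_d0 : ∀ a : A, d 0 (ι a) = mulda 0 a one)
    (h_d_one : d 0 one = 0)
    (h_d : ∀ n (a : A) (ω : Ω n), d (n + 1) (mulda n a ω) = mulda (n + 1) a (d n ω))
    (h_ra_mulda : ∀ n (a a' : A) (ω : Ω n),
        ra (n + 1) a' (mulda n a ω) = mulda n (a * a') ω - mulda n a' (ra n a ω))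
    (h_la_mulda : ∀ n (a a' : A) (ω : Ω n),
        la (n + 1) a' (mulda n a ω) = mulda n a (la n a' ω))
    (h_b : ∀ n (a : A) (ω : Ω n),
        b n (mulda n a ω) = ((-1 : ℂ) ^ n) • (ra n a ω - la n a ω))
    (h_span : ∀ n (η : Ω (n + 1)),
        η ∈ Submodule.span ℂ {x : Ω (n + 1) | ∃ (a : A) (ω : Ω n), x = mulda n a ω})
    -- the Karoubi operator k = 1 - (bd + db) :
    (k : ∀ n, Ω n →ₗ[ℂ] Ω n)
    (hk0 : ∀ ω : Ω 0, k 0 ω = ω - b 0 (d 0 ω))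
    (hk : ∀ n (ω : Ω (n + 1)),
        k (n + 1) ω = ω - b (n + 1) (d (n + 1) ω) - d n (b n ω))
    -- Connes' boundary B = (1 + k + … + kⁿ) d on n-forms :
    (B : ∀ n, Ω n →ₗ[ℂ] Ω (n + 1))
    (hB : ∀ n (ω : Ω n),
        B n ω = ∑ i ∈ Finset.range (n + 1), (⇑(k (n + 1)))^[i] (d n ω))
    -- the idempotent and the Chern character components :
    (e : A) (he : e * e = e)
    (w : ∀ m, Ω m)
    (hw0 : w 0 = ι e - ((2 : ℂ)⁻¹) • one)
    (hwsucc : ∀ m, w (m + 1) = mulda m e (w m))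
    (ch : ∀ n : ℕ, Ω (2 * n))
    (hch0 : ch 0 = ι e)
    (hchsucc : ∀ n : ℕ, ch (n + 1) =
        (((-1 : ℂ) ^ (n + 1)) * ((2 * (n + 1)).factorial : ℂ) / ((n + 1).factorial : ℂ))
          • w (2 * (n + 1))) :
    ∀ n : ℕ, b (2 * n + 1) (ch (n + 1)) + B (2 * n) (ch n) = 0 := by

  classical
  let v : ∀ j, Ω j := fun j => Nat.rec one (fun j vj => mulda j e vj) j
  have hv0 : v 0 = one := rfl
  have hvs : ∀ j, v (j + 1) = mulda j e (v j) := fun _ => rfl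
  have stepOdd : ∀ j, la j e (v j) = ra j e (v j) →
      la (j+1) e (v (j+1)) + ra (j+1) e (v (j+1)) = v (j+1) := by
    intro j h
    rw [hvs, h_la_mulda, h_ra_mulda, he, h]
    abel
  have stepEven : ∀ j, la (j+1) e (v (j+1)) + ra (j+1) e (v (j+1)) = v (j+1) →
      la (j+2) e (v (j+2)) = ra (j+2) e (v (j+2)) := by
    intro j h
    have h' : la (j+1) e (v (j+1)) = v (j+1) - ra (j+1) e (v (j+1)) := eq_sub_of_add_eq h
    rw [show v (j+2) = mulda (j+1) e (v (j+1)) from rfl, h_la_mulda, h_ra_mulda, he, h',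
      map_sub]
  have hpar : ∀ m, la (2*m) e (v (2*m)) = ra (2*m) e (v (2*m)) ∧
      la (2*m+1) e (v (2*m+1)) + ra (2*m+1) e (v (2*m+1)) = v (2*m+1) := by
    intro m
    induction m with
    | zero =>
      have h0 : la 0 e (v 0) = ra 0 e (v 0) := by rw [hv0, h_one_l, h_one_r]
      exact ⟨h0, stepOdd 0 h0⟩
    | succ m ih =>
      have he2 : la (2*m+2) e (v (2*m+2)) = ra (2*m+2) e (v (2*m+2)) := stepEven (2*m) ih.2
      exact ⟨he2, stepOdd (2*m+2) he2⟩
  have hw' : ∀ j, w j = la j e (v j) - (2:ℂ)⁻¹ • v j := by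
    intro j
    induction j with
    | zero => rw [hw0, hv0, h_one_l]
    | succ j ih => rw [hwsucc, ih, hvs, map_sub, map_smul, h_la_mulda]
  have hdv : ∀ j, d j (v j) = 0 := by
    intro j
    induction j with
    | zero => rw [hv0]; exact h_d_one
    | succ j ih => rw [hvs, h_d, ih, map_zero]
  have hdw : ∀ j, d j (w j) = v (j+1) := by
    intro j
    induction j with
    | zero =>
      rw [hw0, map_sub, map_smul, h_d0, h_d_one, smul_zero, sub_zero, hvs, hv0]
    | succ j ih => rw [hwsucc, h_d, ih, hvs (j+1)]
  have hbvodd : ∀ m, b (2*m) (v (2*m+1)) = 0 := by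
    intro m
    rw [hvs, h_b, (hpar m).1, sub_self, smul_zero]
  have hkv : ∀ m, k (2*m+1) (v (2*m+1)) = v (2*m+1) := by
    intro m
    rw [hk (2*m), hdv, hbvodd, map_zero, map_zero, sub_zero, sub_zero]
  have hkiter : ∀ m i, (⇑(k (2*m+1)))^[i] (v (2*m+1)) = v (2*m+1) := by
    intro m i
    induction i with
    | zero => rfl
    | succ i ih => rw [Function.iterate_succ_apply', ih, hkv]
  have hBw : ∀ m, B (2*m) (w (2*m)) = ((2*m+1 : ℕ) : ℂ) • v (2*m+1) := by
    intro m
    rw [hB, hdw]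
    have hsum : ∑ i ∈ Finset.range (2*m+1), (⇑(k (2*m+1)))^[i] (v (2*m+1))
        = ∑ _i ∈ Finset.range (2*m+1), v (2*m+1) :=
      Finset.sum_congr rfl fun i _ => hkiter m i
    rw [hsum, Finset.sum_const, Finset.card_range]
    exact (Nat.cast_smul_eq_nsmul ℂ _ _).symm
  have hbw : ∀ n, b (2*n+1) (w (2*(n+1))) = (2:ℂ)⁻¹ • v (2*n+1) := by
    intro n
    have hra : ra (2*n+1) e (v (2*n+1)) = v (2*n+1) - la (2*n+1) e (v (2*n+1)) :=
      eq_sub_of_add_eq' (hpar n).2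
    have hsign : ((-1 : ℂ)) ^ (2*n+1) = -1 := (odd_two_mul_add_one n).neg_one_pow
    rw [show w (2*(n+1)) = mulda (2*n+1) e (w (2*n+1)) from hwsucc (2*n+1), h_b,
      hw' (2*n+1), map_sub, map_sub, map_smul, map_smul, h_rl, hra, map_sub, h_ll, he, hsign]
    module
  intro n
  cases n with
  | zero =>
    have hB0 : B (2*0) (ch 0) = v 1 := by
      show B 0 (ch 0) = v 1
      rw [hch0, hB]
      simp only [zero_add, Finset.range_one, Finset.sum_singleton, Function.iterate_zero,
        id_eq]
      rw [h_d0]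
      exact rfl
    rw [hchsucc 0, map_smul, hbw 0, hB0, show v (2*0+1) = v 1 from rfl, smul_smul]
    have hc : (-1:ℂ) ^ (0+1) * ((2*(0+1)).factorial : ℂ) / ((0+1).factorial : ℂ) * 2⁻¹
        = -1 := by
      norm_num [show (2*(0+1)).factorial = 2 from rfl, show (0+1).factorial = 1 from rfl]
    rw [hc, neg_one_smul]
    exact neg_add_cancel (v 1)
  | succ m =>
    rw [hchsucc (m+1), hchsucc m, map_smul, map_smul, hbw (m+1), hBw (m+1),
      smul_smul, smul_smul, ← add_smul]
    apply smul_eq_zero_of_left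
    have e1 : ((2*(m+1+1)).factorial : ℂ)
        = ((2:ℂ)*m+4) * (((2:ℂ)*m+3) * ((2*(m+1)).factorial : ℂ)) := by
      have h2 : 2*(m+1+1) = (2*(m+1)+1)+1 := by ring
      rw [h2, Nat.factorial_succ, Nat.factorial_succ]
      push_cast
      ring
    have e2 : ((m+1+1).factorial : ℂ) = ((m:ℂ)+2) * ((m+1).factorial : ℂ) := by
      rw [Nat.factorial_succ]
      push_cast
      ring
    have hx : ((2*(m+1)).factorial : ℂ) ≠ 0 := Nat.cast_ne_zero.mpr (Nat.factorial_ne_zero _)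
    have hy : ((m+1).factorial : ℂ) ≠ 0 := Nat.cast_ne_zero.mpr (Nat.factorial_ne_zero _)
    have hz : ((m:ℂ)+2) ≠ 0 := by
      have : ((m+2 : ℕ) : ℂ) ≠ 0 := Nat.cast_ne_zero.mpr (by omega)
      push_cast at this
      exact this
    rw [e1, e2, pow_succ]
    push_cast
    field_simp
    ring
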